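/- arXiv:0809.4030 — 2 statements merged into one kernel-verified Lean document; each statement's English description precedes it below -/
import Mathlib

section
/- For every complex number z, |sin(z)/z| ≤ e^{|Im z|} (with the convention sin(0)/0 = 1). -/
open intervalIntegral

lemma abs_cos_le_exp_abs_im (w : ℂ) : ‖Complex.cos w‖ ≤ Real.exp |w.im| := by
  rw [Complex.cos, norm_div]
  have h1 : ‖Complex.exp (w * Complex.I)‖ = Real.exp (-w.im) := by
    rw [Complex.norm_exp]; congr 1; simp [Complex.mul_re]
  have h2 : ‖Complex.exp (-w * Complex.I)‖ = Real.exp (w.im) := by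
    rw [Complex.norm_exp]; congr 1; simp [Complex.mul_re]
  calc ‖Complex.exp (w * Complex.I) + Complex.exp (-w * Complex.I)‖ / ‖(2:ℂ)‖
      ≤ (Real.exp (-w.im) + Real.exp w.im) / 2 := by
        rw [Complex.norm_two]
        gcongr
        exact (norm_add_le _ _).trans (by rw [h1, h2])
    _ ≤ (Real.exp |w.im| + Real.exp |w.im|) / 2 := by
        gcongr <;> [exact neg_le_abs _; exact le_abs_self _]
    _ = Real.exp |w.im| := by ring

lemma sin_eq_integral (z : ℂ) :
    Complex.sin z = ∫ t in (0:ℝ)..1, z * Complex.cos (t * z) := by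
  have h : ∀ t ∈ Set.uIcc (0:ℝ) 1, HasDerivAt (fun s : ℝ => Complex.sin (s * z))
      (z * Complex.cos (t * z)) t := by
    intro t _
    have h1 : HasDerivAt (fun s : ℝ => (s : ℂ) * z) z t := by
      simpa using (Complex.ofRealCLM.hasDerivAt (x := t)).mul_const z
    simpa [mul_comm, Function.comp_def] using (Complex.hasDerivAt_sin (t * z)).comp t h1
  have := intervalIntegral.integral_eq_sub_of_hasDerivAt h
    (by apply Continuous.intervalIntegrable; continuity)
  simpa using this.symm

lemma abs_sin_le (z : ℂ) : ‖Complex.sin z‖ ≤ ‖z‖ * Real.exp |z.im| := by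
  rw [sin_eq_integral z]
  have := intervalIntegral.norm_integral_le_of_norm_le_const
    (C := ‖z‖ * Real.exp |z.im|)
    (f := fun t : ℝ => z * Complex.cos (t * z)) (a := 0) (b := 1) ?_
  · simpa using this
  · intro t ht
    rw [Set.uIoc_of_le (by norm_num)] at ht
    rw [norm_mul]
    gcongr
    refine (abs_cos_le_exp_abs_im _).trans ?_
    apply Real.exp_le_exp.2
    have : |(t * z).im| = |t| * |z.im| := by
      rw [← abs_mul]; congr 1; simp [Complex.mul_im]
    rw [this]
    have h1 : |t| ≤ 1 := by rw [abs_le]; constructor <;> nlinarith [ht.1, ht.2]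
    nlinarith [abs_nonneg z.im, abs_nonneg t]

/-- for every complex `z`, `|sin z / z| ≤ exp |Im z|`
(with the convention `sin 0 / 0 = 1`). -/
theorem abs_sin_div_le_exp_abs_im (z : ℂ) :
    ‖(if z = 0 then 1 else Complex.sin z / z)‖ ≤ Real.exp |z.im| := by
  split_ifs with h
  · simp [h, Real.one_le_exp_iff]
  · rw [norm_div, div_le_iff₀ (by simpa using h)]
    simpa [mul_comm] using abs_sin_le z
end

section
/- Suppose for x ∈ X and a closed operator A one has a sequence u_j ∈ Ξ^{2^j} with ‖x − u_j‖ ≤ (m/2^{nj})·ω(2^{-j}), where Bernstein's inequality ‖Aⁿy‖ ≤ c_n α^n ‖y‖ holds on Ξ^α for α ≥ 1 and ω is non-decreasing with doubling constant c on [0,1] and ∫₀¹ ω(u)/u du < ∞. Then ∑_{j=1}^∞ ‖Aⁿu_j − Aⁿu_{j-1}‖ ≤ (2^{n+1} c c_n m / ln 2)·∫₀¹ ω(u)/u du < ∞, hence x ∈ D(Aⁿ) and ‖Aⁿx − Aⁿu_{j₀}‖ ≤ (2^{n+1} c c_n m/ln 2)·∫₀^{2^{-j₀}} ω(u)/u du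 for all j₀. -/
open Filter Set

set_option maxHeartbeats 1000000

/-- under the Bernstein inequality on the nested, difference-closed
family `Ξ^α` and the approximation `‖x − u_j‖ ≤ (m/2^{nj}) ω(2^{-j})`, the series
`∑ ‖Aⁿu_j − Aⁿu_{j-1}‖` converges with the explicit bound, hence (Aⁿ being closed)
`Aⁿx` is the limit and `‖Aⁿx − Aⁿu_{j₀}‖ ≤ (2^{n+1} c cₙ m / ln 2) ∫₀^{2^{-j₀}} ω(u)/u du`. -/
theorem inverse_theorem_series_step
    {X : Type*} [NormedAddCommGroup X] [NormedSpace ℂ X] [CompleteSpace X]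
    (A : X →ₗ[ℂ] X) (n : ℕ)
    (hclosed : ∀ (v : ℕ → X) (p q : X),
      Tendsto v atTop (nhds p) → Tendsto (fun m => (A ^ n) (v m)) atTop (nhds q) →
        (A ^ n) p = q)
    (Ξ : ℝ → Set X)
    (hnested : ∀ r s : ℝ, r ≤ s → Ξ r ⊆ Ξ s)
    (hsub : ∀ (α : ℝ), ∀ y ∈ Ξ α, ∀ z ∈ Ξ α, y - z ∈ Ξ α)
    (cn : ℝ) (hcn : 0 < cn)
    (hBern : ∀ α : ℝ, 1 ≤ α → ∀ y ∈ Ξ α, ‖(A ^ n) y‖ ≤ cn * α ^ n * ‖y‖)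
    (ω : ℝ → ℝ)
    (hωcont : ContinuousOn ω (Ici 0))
    (hωmono : MonotoneOn ω (Ici 0))
    (hωnonneg : ∀ t ∈ Ici (0:ℝ), 0 ≤ ω t)
    (hωzero : ω 0 = 0)
    (c : ℝ) (hc : 0 < c)
    (hdouble : ∀ t ∈ Icc (0:ℝ) 1, ω (2 * t) ≤ c * ω t)
    (hint : IntervalIntegrable (fun u => ω u / u) MeasureTheory.volume 0 1)
    (m : ℝ) (hm : 0 < m)
    (x : X) (u : ℕ → X)
    (hu : ∀ j : ℕ, u j ∈ Ξ ((2:ℝ) ^ j))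
    (happrox : ∀ j : ℕ, ‖x - u j‖ ≤ m / 2 ^ (n * j) * ω ((2:ℝ)⁻¹ ^ j)) :
    Summable (fun j : ℕ => ‖(A ^ n) (u (j + 1)) - (A ^ n) (u j)‖) ∧
    (∑' j : ℕ, ‖(A ^ n) (u (j + 1)) - (A ^ n) (u j)‖) ≤
      (2 ^ (n + 1) * c * cn * m / Real.log 2) * ∫ v in (0:ℝ)..1, ω v / v ∧
    ∀ j₀ : ℕ, ‖(A ^ n) x - (A ^ n) (u j₀)‖ ≤
      (2 ^ (n + 1) * c * cn * m / Real.log 2) * ∫ v in (0:ℝ)..((2:ℝ)⁻¹ ^ j₀), ω v / v := by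
  have hlog2 : (0:ℝ) < Real.log 2 := Real.log_pos one_lt_two
  set T : X →ₗ[ℂ] X := A ^ n with hT
  set d : ℕ → X := fun j => T (u (j + 1)) - T (u j) with hd
  have hωmem : ∀ j : ℕ, ((2:ℝ)⁻¹ ^ j) ∈ Ici (0:ℝ) := fun j => by
    simp only [mem_Ici]; positivity
  have hωn : ∀ j : ℕ, 0 ≤ ω ((2:ℝ)⁻¹ ^ j) := fun j => hωnonneg _ (hωmem j)
  -- step 1: the Bernstein bound on each difference
  have hstep : ∀ j : ℕ, ‖d j‖ ≤ (2 ^ (n + 1) * cn * m) * ω ((2:ℝ)⁻¹ ^ j) := by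
    intro j
    have hmem : u (j + 1) - u j ∈ Ξ ((2:ℝ) ^ (j + 1)) :=
      hsub _ _ (hu (j + 1)) _
        (hnested _ _ (pow_le_pow_right₀ one_le_two (Nat.le_succ j)) (hu j))
    have h1 : (1:ℝ) ≤ 2 ^ (j + 1) := one_le_pow₀ one_le_two
    have hB := hBern _ h1 _ hmem
    rw [map_sub] at hB
    have hdiff : ‖u (j + 1) - u j‖ ≤
        m / 2 ^ (n * (j + 1)) * ω ((2:ℝ)⁻¹ ^ (j + 1)) + m / 2 ^ (n * j) * ω ((2:ℝ)⁻¹ ^ j) := by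
      have he : u (j + 1) - u j = (x - u j) - (x - u (j + 1)) := by abel
      calc ‖u (j + 1) - u j‖ ≤ ‖x - u (j + 1)‖ + ‖x - u j‖ := by
            rw [he]; rw [norm_sub_rev]; exact norm_sub_le _ _
        _ ≤ _ := add_le_add (happrox (j + 1)) (happrox j)
    have hwmono : ω ((2:ℝ)⁻¹ ^ (j + 1)) ≤ ω ((2:ℝ)⁻¹ ^ j) :=
      hωmono (hωmem (j + 1)) (hωmem j)
        (pow_le_pow_of_le_one (by norm_num) (by norm_num) (Nat.le_succ j))
    have hP : (0:ℝ) < 2 ^ (n * j) := by positivity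
    have hQ : (0:ℝ) < 2 ^ (n * (j + 1)) := by positivity
    have he1 : ((2:ℝ) ^ (j + 1)) ^ n = 2 ^ (n * (j + 1)) := by
      rw [← pow_mul, mul_comm]
    have he2 : (2:ℝ) ^ (n * (j + 1)) = 2 ^ (n * j) * 2 ^ n := by
      rw [← pow_add]; ring_nf
    have h2n : (1:ℝ) ≤ 2 ^ n := one_le_pow₀ one_le_two
    calc ‖d j‖ ≤ cn * ((2:ℝ) ^ (j + 1)) ^ n * ‖u (j + 1) - u j‖ := hB
      _ ≤ cn * ((2:ℝ) ^ (j + 1)) ^ n *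
          (m / 2 ^ (n * (j + 1)) * ω ((2:ℝ)⁻¹ ^ (j + 1)) + m / 2 ^ (n * j) * ω ((2:ℝ)⁻¹ ^ j)) := by
          apply mul_le_mul_of_nonneg_left hdiff; positivity
      _ ≤ cn * ((2:ℝ) ^ (j + 1)) ^ n *
          (m / 2 ^ (n * (j + 1)) * ω ((2:ℝ)⁻¹ ^ j) + m / 2 ^ (n * j) * ω ((2:ℝ)⁻¹ ^ j)) := by
          apply mul_le_mul_of_nonneg_left _ (by positivity)
          apply add_le_add_left
          apply mul_le_mul_of_nonneg_left hwmono (by positivity)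
      _ = cn * m * (1 + 2 ^ n) * ω ((2:ℝ)⁻¹ ^ j) := by
          rw [he1, he2]; field_simp
      _ ≤ (2 ^ (n + 1) * cn * m) * ω ((2:ℝ)⁻¹ ^ j) := by
          apply mul_le_mul_of_nonneg_right _ (hωn j)
          have hpow : (1:ℝ) + 2 ^ n ≤ 2 ^ (n + 1) := by rw [pow_succ]; linarith
          have := mul_le_mul_of_nonneg_left hpow (mul_pos hcn hm).le
          nlinarith
  -- interval integrability on positive subintervals
  have hIcont : ∀ a b : ℝ, 0 < a → a ≤ b →
      IntervalIntegrable (fun v => ω v / v) MeasureTheory.volume a b := by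
    intro a b ha hab
    apply ContinuousOn.intervalIntegrable
    rw [uIcc_of_le hab]
    apply ContinuousOn.div
    · exact hωcont.mono (fun v hv => le_trans ha.le hv.1)
    · exact continuousOn_id
    · intro v hv; exact ne_of_gt (lt_of_lt_of_le ha hv.1)
  -- step 2: compare ω with the integral on dyadic intervals
  have hkey2 : ∀ j : ℕ, ω ((2:ℝ)⁻¹ ^ j) * Real.log 2 ≤
      c * ∫ v in ((2:ℝ)⁻¹ ^ (j + 1))..((2:ℝ)⁻¹ ^ j), ω v / v := by
    intro j
    set a : ℝ := (2:ℝ)⁻¹ ^ (j + 1) with haa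
    have ha : 0 < a := by positivity
    have h2a : (2:ℝ)⁻¹ ^ j = 2 * a := by rw [haa, pow_succ]; ring
    have ha1 : a ≤ 1 := pow_le_one₀ (by norm_num) (by norm_num)
    have hmem : ∀ v ∈ Icc a (2 * a), ω (2 * a) / c ≤ ω v := by
      intro v hv
      have h1 : ω (2 * a) ≤ c * ω a := hdouble a ⟨ha.le, ha1⟩
      have h2 : ω a ≤ ω v := hωmono ha.le (le_trans ha.le hv.1) hv.1
      rw [div_le_iff₀ hc]
      calc ω (2 * a) ≤ c * ω a := h1
        _ ≤ ω v * c := by rw [mul_comm]; exact mul_le_mul_of_nonneg_right h2 hc.le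
    have hab : a ≤ 2 * a := by linarith
    have hint1 : IntervalIntegrable (fun v => ω (2 * a) / c * v⁻¹)
        MeasureTheory.volume a (2 * a) := by
      apply ContinuousOn.intervalIntegrable
      rw [uIcc_of_le hab]
      apply ContinuousOn.mul continuousOn_const
      exact ContinuousOn.inv₀ continuousOn_id
        (fun v hv => ne_of_gt (lt_of_lt_of_le ha hv.1))
    have hint2 := hIcont a (2 * a) ha hab
    have hmono : (∫ v in a..(2 * a), ω (2 * a) / c * v⁻¹) ≤ ∫ v in a..(2 * a), ω v / v := by
      apply intervalIntegral.integral_mono_on hab hint1 hint2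
      intro v hv
      have hv0 : 0 < v := lt_of_lt_of_le ha hv.1
      rw [div_eq_mul_inv (ω v)]
      exact mul_le_mul_of_nonneg_right (hmem v hv) (by positivity)
    have hcomp : (∫ v in a..(2 * a), ω (2 * a) / c * v⁻¹) = ω (2 * a) / c * Real.log 2 := by
      rw [intervalIntegral.integral_const_mul, integral_inv_of_pos ha (by linarith)]
      congr 1
      rw [mul_div_assoc, div_self (ne_of_gt ha)]; norm_num
    rw [h2a]
    calc ω (2 * a) * Real.log 2 = c * (ω (2 * a) / c * Real.log 2) := by
          field_simp
      _ ≤ c * ∫ v in a..(2 * a), ω v / v := by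
          apply mul_le_mul_of_nonneg_left _ hc.le
          rw [← hcomp]; exact hmono
  -- nonneg of integrand
  have hfnn : ∀ v : ℝ, 0 ≤ v → 0 ≤ ω v / v := fun v hv =>
    div_nonneg (hωnonneg v hv) hv
  -- integrability on [0, 2⁻¹^j]
  have hint0 : ∀ t : ℝ, 0 ≤ t → t ≤ 1 →
      IntervalIntegrable (fun v => ω v / v) MeasureTheory.volume 0 t := by
    intro t ht ht1
    exact hint.mono_set (by rw [uIcc_of_le ht, uIcc_of_le zero_le_one]; exact Icc_subset_Icc le_rfl ht1)
  have hpow1 : ∀ j : ℕ, ((2:ℝ)⁻¹ ^ j) ≤ 1 := fun j => pow_le_one₀ (by norm_num) (by norm_num)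
  have hpowpos : ∀ j : ℕ, (0:ℝ) < (2:ℝ)⁻¹ ^ j := fun j => by positivity
  -- step 3: partial-sum bound
  have hpartial : ∀ (j₀ N : ℕ),
      ∑ k ∈ Finset.range N, ‖d (j₀ + k)‖ ≤
      (2 ^ (n + 1) * c * cn * m / Real.log 2) * ∫ v in (0:ℝ)..((2:ℝ)⁻¹ ^ j₀), ω v / v := by
    intro j₀ N
    set g : ℕ → ℝ := fun k => (2:ℝ)⁻¹ ^ (j₀ + k) with hg
    have hterm : ∀ k : ℕ, ‖d (j₀ + k)‖ ≤
        (2 ^ (n + 1) * cn * m) * (c / Real.log 2) *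
          ∫ v in (g (k + 1))..(g k), ω v / v := by
      intro k
      have h1 := hstep (j₀ + k)
      have h2 := hkey2 (j₀ + k)
      have h3 : ω ((2:ℝ)⁻¹ ^ (j₀ + k)) ≤
          (c / Real.log 2) * ∫ v in (g (k + 1))..(g k), ω v / v := by
        rw [div_mul_eq_mul_div, le_div_iff₀ hlog2]
        have e1 : g (k + 1) = (2:ℝ)⁻¹ ^ ((j₀ + k) + 1) := rfl
        have e2 : g k = (2:ℝ)⁻¹ ^ (j₀ + k) := rfl
        rw [e1, e2]
        linarith [h2]
      calc ‖d (j₀ + k)‖ ≤ (2 ^ (n + 1) * cn * m) * ω ((2:ℝ)⁻¹ ^ (j₀ + k)) := h1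
        _ ≤ (2 ^ (n + 1) * cn * m) *
            ((c / Real.log 2) * ∫ v in (g (k + 1))..(g k), ω v / v) := by
            apply mul_le_mul_of_nonneg_left h3 (by positivity)
        _ = _ := by ring
    have hadj : ∀ k, k < N → IntervalIntegrable (fun v => ω v / v)
        MeasureTheory.volume (g (k + 1)) (g k) := by
      intro k _
      exact (hIcont (g (k + 1)) (g k) (hpowpos _)
        (pow_le_pow_of_le_one (by norm_num) (by norm_num) (by omega))).symm |>.symm
    have htelint : ∑ k ∈ Finset.range N, (∫ v in (g (k + 1))..(g k), ω v / v) =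
        ∫ v in (g N)..(g 0), ω v / v := by
      have h := intervalIntegral.sum_integral_adjacent_intervals
        (f := fun v => ω v / v) (μ := MeasureTheory.volume) (a := g) (n := N)
        (fun k hk => ((hadj k hk).symm))
      calc ∑ k ∈ Finset.range N, (∫ v in (g (k + 1))..(g k), ω v / v)
          = ∑ k ∈ Finset.range N, -(∫ v in (g k)..(g (k + 1)), ω v / v) := by
            apply Finset.sum_congr rfl; intro k _
            rw [intervalIntegral.integral_symm]
        _ = -(∫ v in (g 0)..(g N), ω v / v) := by
            rw [Finset.sum_neg_distrib]; exact congrArg Neg.neg h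
        _ = _ := (intervalIntegral.integral_symm _ _).symm
    have hib : (∫ v in (g N)..(g 0), ω v / v) ≤ ∫ v in (0:ℝ)..(g 0), ω v / v := by
      have hgN0 : (0:ℝ) < g N := hpowpos (j₀ + N)
      have hgN1 : g N ≤ 1 := hpow1 (j₀ + N)
      have hgNg0 : g N ≤ g 0 :=
        pow_le_pow_of_le_one (by norm_num) (by norm_num) (by omega)
      have hiN := hint0 (g N) hgN0.le hgN1
      have hNb := hIcont (g N) (g 0) hgN0 hgNg0
      have hsplit := intervalIntegral.integral_add_adjacent_intervals hiN hNb
      have hnn : (0:ℝ) ≤ ∫ v in (0:ℝ)..(g N), ω v / v := by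
        apply intervalIntegral.integral_nonneg hgN0.le
        intro v hv; exact hfnn v hv.1
      linarith
    calc ∑ k ∈ Finset.range N, ‖d (j₀ + k)‖
        ≤ ∑ k ∈ Finset.range N, ((2 ^ (n + 1) * cn * m) * (c / Real.log 2) *
            ∫ v in (g (k + 1))..(g k), ω v / v) := Finset.sum_le_sum (fun k _ => hterm k)
      _ = (2 ^ (n + 1) * cn * m) * (c / Real.log 2) *
            ∑ k ∈ Finset.range N, (∫ v in (g (k + 1))..(g k), ω v / v) := by
            rw [Finset.mul_sum]
      _ = (2 ^ (n + 1) * cn * m) * (c / Real.log 2) *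
            ∫ v in (g N)..(g 0), ω v / v := by rw [htelint]
      _ ≤ (2 ^ (n + 1) * cn * m) * (c / Real.log 2) *
            ∫ v in (0:ℝ)..(g 0), ω v / v := by
            apply mul_le_mul_of_nonneg_left hib (by positivity)
      _ = (2 ^ (n + 1) * c * cn * m / Real.log 2) * ∫ v in (0:ℝ)..((2:ℝ)⁻¹ ^ j₀), ω v / v := by
            have : g 0 = (2:ℝ)⁻¹ ^ j₀ := by simp [hg]
            rw [this]; ring
  -- summability
  have hb0 : ∀ j : ℕ, 0 ≤ ‖d j‖ := fun j => norm_nonneg _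
  have hsummable : Summable (fun j => ‖d j‖) := by
    apply summable_of_sum_range_le hb0
    intro N
    have := hpartial 0 N
    simpa using this
  have htsum : (∑' j : ℕ, ‖d j‖) ≤
      (2 ^ (n + 1) * c * cn * m / Real.log 2) * ∫ v in (0:ℝ)..1, ω v / v := by
    apply Summable.tsum_le_of_sum_range_le hsummable
    intro N
    have := hpartial 0 N
    simpa using this
  -- convergence of T (u j)
  have hdsum : Summable d := Summable.of_norm hsummable
  have htel : ∀ N, ∑ i ∈ Finset.range N, d i = T (u N) - T (u 0) :=
    fun N => Finset.sum_range_sub (fun i => T (u i)) N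
  have hq : Tendsto (fun N => T (u N)) atTop (nhds ((∑' i, d i) + T (u 0))) := by
    have h1 := hdsum.hasSum.tendsto_sum_nat
    have h2 := h1.add (tendsto_const_nhds (x := T (u 0)) (f := atTop))
    simpa [htel, sub_add_cancel] using h2
  have hux : Tendsto u atTop (nhds x) := by
    rw [tendsto_iff_norm_sub_tendsto_zero]
    have hω0 : Tendsto (fun j : ℕ => ω ((2:ℝ)⁻¹ ^ j)) atTop (nhds 0) := by
      have h1 : Tendsto (fun j : ℕ => (2:ℝ)⁻¹ ^ j) atTop (nhds 0) :=
        tendsto_pow_atTop_nhds_zero_of_lt_one (by norm_num) (by norm_num)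
      have h2 : Tendsto (fun j : ℕ => (2:ℝ)⁻¹ ^ j) atTop (nhdsWithin 0 (Ici 0)) :=
        tendsto_nhdsWithin_of_tendsto_nhds_of_eventually_within _ h1
          (Eventually.of_forall fun j => mem_Ici.2 (by positivity))
      have h3 := (hωcont 0 (mem_Ici.2 le_rfl)).tendsto.comp h2
      simpa [hωzero, Function.comp_def] using h3
    apply squeeze_zero (fun j => norm_nonneg _) (g := fun j => m * ω ((2:ℝ)⁻¹ ^ j))
    · intro j
      rw [norm_sub_rev]
      calc ‖x - u j‖ ≤ m / 2 ^ (n * j) * ω ((2:ℝ)⁻¹ ^ j) := happrox j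
        _ ≤ m * ω ((2:ℝ)⁻¹ ^ j) := by
            apply mul_le_mul_of_nonneg_right _ (hωn j)
            exact div_le_self hm.le (one_le_pow₀ one_le_two)
    · simpa using hω0.const_mul m
  have hAx : T x = (∑' i, d i) + T (u 0) := hclosed u x _ hux hq
  refine ⟨hsummable, htsum, ?_⟩
  intro j₀
  have hd' : Summable (fun k => d (j₀ + k)) := by
    have := (summable_nat_add_iff (f := d) j₀).2 hdsum
    simpa [add_comm] using this
  have hns : Summable (fun k => ‖d (j₀ + k)‖) := by
    have := (summable_nat_add_iff (f := fun j => ‖d j‖) j₀).2 hsummable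
    simpa [add_comm] using this
  have htel' : ∀ N, ∑ i ∈ Finset.range N, d (j₀ + i) = T (u (j₀ + N)) - T (u j₀) := by
    intro N
    exact Finset.sum_range_sub (fun i => T (u (j₀ + i))) N
  have hq' : Tendsto (fun N => T (u (j₀ + N))) atTop (nhds ((∑' i, d i) + T (u 0))) :=
    hq.comp (tendsto_atTop_mono (fun N => Nat.le_add_left N j₀) tendsto_id)
  have h5 : Tendsto (fun N => ∑ i ∈ Finset.range N, d (j₀ + i)) atTop
      (nhds ((∑' i, d i) + T (u 0) - T (u j₀))) := by
    have := hq'.sub (tendsto_const_nhds (x := T (u j₀)) (f := atTop))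
    simpa [htel'] using this
  have h6 := hd'.hasSum.tendsto_sum_nat
  have h7 : (∑' k, d (j₀ + k)) = (∑' i, d i) + T (u 0) - T (u j₀) :=
    tendsto_nhds_unique h6 h5
  have h8 : T x - T (u j₀) = ∑' k, d (j₀ + k) := by
    rw [hAx, h7]
  calc ‖T x - T (u j₀)‖ = ‖∑' k, d (j₀ + k)‖ := by rw [h8]
    _ ≤ ∑' k, ‖d (j₀ + k)‖ := norm_tsum_le_tsum_norm hns
    _ ≤ (2 ^ (n + 1) * c * cn * m / Real.log 2) *
        ∫ v in (0:ℝ)..((2:ℝ)⁻¹ ^ j₀), ω v / v :=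
      Summable.tsum_le_of_sum_range_le hns (fun N => hpartial j₀ N)
end
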